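/- arXiv:2512.20219 — 2 statements merged into one kernel-verified Lean document; each statement's English description precedes it below -/
import Mathlib

section
/- Let Y, W₁, W₂, E be random variables with W₁, W₂, E mutually independent, E[E] = 0, and Y = W₁ + W₂ + E with all variables square-integrable with positive variances. Then Var(E[Y | W₁, W₂]) − Var(E[Y | W₁]) − Var(E[Y | W₂]) = 0. Equivalently, E[(E[Y|W₁,W₂])²] − E[(E[Y|W₁])²] − E[(E[Y|W₂])²] + (E[Y])² = 0. -/
open MeasureTheory ProbabilityTheory

lemma my_variance_congr {Ω : Type*} {mΩ : MeasurableSpace Ω} {P : Measure Ω}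
    {f g : Ω → ℝ} (h : f =ᵐ[P] g) : variance f P = variance g P := by
  unfold variance evariance
  rw [integral_congr_ae h]
  exact congrArg ENNReal.toReal
    (lintegral_congr_ae (h.mono fun ω hω => by dsimp only; rw [hω]))

lemma my_variance_add_const {Ω : Type*} {mΩ : MeasurableSpace Ω} {P : Measure Ω}
    [IsProbabilityMeasure P] {f : Ω → ℝ} (hf : Integrable f P) (c : ℝ) :
    variance (fun ω => f ω + c) P = variance f P := by
  unfold variance evariance
  rw [integral_add hf (integrable_const c), integral_const]
  simp only [measure_univ, probReal_univ, ENNReal.toReal_one, smul_eq_mul, one_mul]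
  congr 1
  refine lintegral_congr fun ω => ?_
  have h : f ω + c - (∫ x, f x ∂P + c) = f ω - ∫ x, f x ∂P := by ring
  rw [h]

/-- In the additive model `Y = W₁ + W₂ + E` with mutually independent inputs and
mean-zero noise, the interaction explainability of `W₁` and `W₂` vanishes:
`Var(E[Y|W₁,W₂]) − Var(E[Y|W₁]) − Var(E[Y|W₂]) = 0`, equivalently
`E[(E[Y|W₁,W₂])²] − E[(E[Y|W₁])²] − E[(E[Y|W₂])²] + (E[Y])² = 0`. -/
theorem additive_model_no_interaction
    {Ω : Type*} {mΩ : MeasurableSpace Ω} (P : Measure Ω) [IsProbabilityMeasure P]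
    (W₁ W₂ Eps : Ω → ℝ) (hW₁ : Measurable W₁) (hW₂ : Measurable W₂)
    (hEps : Measurable Eps)
    (hindep : iIndepFun ![W₁, W₂, Eps] P)
    (hmean : ∫ ω, Eps ω ∂P = 0)
    (hW₁2 : MemLp W₁ 2 P) (hW₂2 : MemLp W₂ 2 P) (hEps2 : MemLp Eps 2 P)
    (hvW₁ : 0 < variance W₁ P) (hvW₂ : 0 < variance W₂ P)
    (hvEps : 0 < variance Eps P)
    (Y : Ω → ℝ) (hY : Y = fun ω => W₁ ω + W₂ ω + Eps ω) :
    variance (P[Y | MeasurableSpace.comap W₁ inferInstance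
        ⊔ MeasurableSpace.comap W₂ inferInstance]) P
      - variance (P[Y | MeasurableSpace.comap W₁ inferInstance]) P
      - variance (P[Y | MeasurableSpace.comap W₂ inferInstance]) P = 0
    ∧ (∫ ω, ((P[Y | MeasurableSpace.comap W₁ inferInstance
          ⊔ MeasurableSpace.comap W₂ inferInstance]) ω) ^ 2 ∂P)
      - (∫ ω, ((P[Y | MeasurableSpace.comap W₁ inferInstance]) ω) ^ 2 ∂P)
      - (∫ ω, ((P[Y | MeasurableSpace.comap W₂ inferInstance]) ω) ^ 2 ∂P)
      + (∫ ω, Y ω ∂P) ^ 2 = 0 := by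
  have hmeas : ∀ i, Measurable[mΩ] (![W₁, W₂, Eps] i) := by
    intro i; fin_cases i
    · exact hW₁
    · exact hW₂
    · exact hEps
  set m₁ := MeasurableSpace.comap W₁ (inferInstance : MeasurableSpace ℝ) with hm₁def
  set m₂ := MeasurableSpace.comap W₂ (inferInstance : MeasurableSpace ℝ) with hm₂def
  have hle1 : m₁ ≤ mΩ := hW₁.comap_le
  have hle2 : m₂ ≤ mΩ := hW₂.comap_le
  have hle12 : m₁ ⊔ m₂ ≤ mΩ := sup_le hle1 hle2
  have hleE : MeasurableSpace.comap Eps inferInstance ≤ mΩ := hEps.comap_le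
  -- integrability
  have hW₁i : Integrable W₁ P := hW₁2.integrable one_le_two
  have hW₂i : Integrable W₂ P := hW₂2.integrable one_le_two
  have hEi : Integrable Eps P := hEps2.integrable one_le_two
  -- comap of the pair map
  have hpair : MeasurableSpace.comap (fun ω => (W₁ ω, W₂ ω))
      (inferInstance : MeasurableSpace (ℝ × ℝ)) = m₁ ⊔ m₂ := by
    rw [hm₁def, hm₂def,
      show (inferInstance : MeasurableSpace (ℝ × ℝ)) =
        MeasurableSpace.comap Prod.fst inferInstance ⊔
          MeasurableSpace.comap Prod.snd inferInstance from rfl,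
      MeasurableSpace.comap_sup, MeasurableSpace.comap_comp, MeasurableSpace.comap_comp]
    rfl
  -- independence facts
  have hind12 : IndepFun W₁ W₂ P := hindep.indepFun (show (0 : Fin 3) ≠ 1 by decide)
  have hindE12 : Indep (MeasurableSpace.comap Eps inferInstance) (m₁ ⊔ m₂) P := by
    have h : Indep (MeasurableSpace.comap Eps (inferInstance : MeasurableSpace ℝ))
        (MeasurableSpace.comap (fun ω => (W₁ ω, W₂ ω))
          (inferInstance : MeasurableSpace (ℝ × ℝ))) P :=
      (hindep.indepFun_prodMk hmeas 0 1 2 (by decide) (by decide)).symm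
    rwa [hpair] at h
  have hindAux : ∀ (i j k : Fin 3) (f g h : Ω → ℝ), ![W₁, W₂, Eps] i = f →
      ![W₁, W₂, Eps] j = g → ![W₁, W₂, Eps] k = h → i ≠ k → j ≠ k →
      Indep (MeasurableSpace.comap (fun ω => f ω + g ω) inferInstance)
        (MeasurableSpace.comap h inferInstance) P := by
    intro i j k f g h hf hg hh hik hjk
    have h2 := (hindep.indepFun_prodMk hmeas i j k hik hjk).comp
      (measurable_fst.add measurable_snd) measurable_id
    rw [hf, hg, hh] at h2
    exact h2
  -- conditional expectation identifications
  have hsm1 : StronglyMeasurable[m₁] W₁ :=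
    Measurable.stronglyMeasurable (measurable_iff_comap_le.2 le_rfl)
  have hsm2 : StronglyMeasurable[m₂] W₂ :=
    Measurable.stronglyMeasurable (measurable_iff_comap_le.2 le_rfl)
  have hsm12 : StronglyMeasurable[m₁ ⊔ m₂] (fun ω => W₁ ω + W₂ ω) :=
    ((Measurable.of_comap_le le_sup_left).add
      (Measurable.of_comap_le le_sup_right)).stronglyMeasurable
  set a := ∫ ω, W₁ ω ∂P with ha
  set b := ∫ ω, W₂ ω ∂P with hb
  -- E[Y | m₁ ⊔ m₂] = W₁ + W₂ a.e.
  have hc12 : P[Y | m₁ ⊔ m₂] =ᵐ[P] fun ω => W₁ ω + W₂ ω := by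
    have hYeq : Y = (fun ω => W₁ ω + W₂ ω) + Eps := by
      funext ω; simp [hY]
    rw [hYeq]
    refine (condExp_add (hW₁i.add hW₂i) hEi (m₁ ⊔ m₂)).trans ?_
    have h1 : P[W₁ + W₂ | m₁ ⊔ m₂] = W₁ + W₂ :=
      condExp_of_stronglyMeasurable hle12 hsm12 (hW₁i.add hW₂i)
    have h2 : P[Eps | m₁ ⊔ m₂] =ᵐ[P] fun _ => ∫ ω, Eps ω ∂P :=
      condExp_indep_eq hleE hle12
        (Measurable.stronglyMeasurable (measurable_iff_comap_le.2 le_rfl)) hindE12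
    rw [h1]
    filter_upwards [h2] with ω hω
    simp only [Pi.add_apply, hω, hmean, add_zero]
  -- E[Y | m₁] = W₁ + b a.e.
  have hc1 : P[Y | m₁] =ᵐ[P] fun ω => W₁ ω + b := by
    have hYeq : Y = W₁ + fun ω => W₂ ω + Eps ω := by
      funext ω; simp [hY]; ring
    rw [hYeq]
    refine (condExp_add hW₁i (hW₂i.add hEi) m₁).trans ?_
    have h1 : P[W₁ | m₁] = W₁ := condExp_of_stronglyMeasurable hle1 hsm1 hW₁i
    have h2 : P[(fun ω => W₂ ω + Eps ω) | m₁] =ᵐ[P] fun _ => ∫ ω, (W₂ ω + Eps ω) ∂P :=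
      condExp_indep_eq ((hW₂.add hEps).comap_le) hle1
        (Measurable.stronglyMeasurable (measurable_iff_comap_le.2 le_rfl))
        (hindAux 1 2 0 W₂ Eps W₁ rfl rfl rfl (by decide) (by decide))
    have hint : ∫ ω, (W₂ ω + Eps ω) ∂P = b := by
      rw [integral_add hW₂i hEi, hmean, add_zero]
    rw [h1]
    filter_upwards [h2] with ω hω
    have hω' : (P[W₂ + Eps | m₁]) ω = b := by
      rw [show (W₂ + Eps : Ω → ℝ) = fun ω => W₂ ω + Eps ω from rfl, hω, hint]
    simp only [Pi.add_apply]
    rw [hω']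
  -- E[Y | m₂] = W₂ + a a.e.
  have hc2 : P[Y | m₂] =ᵐ[P] fun ω => W₂ ω + a := by
    have hYeq : Y = W₂ + fun ω => W₁ ω + Eps ω := by
      funext ω; simp [hY]; ring
    rw [hYeq]
    refine (condExp_add hW₂i (hW₁i.add hEi) m₂).trans ?_
    have h1 : P[W₂ | m₂] = W₂ := condExp_of_stronglyMeasurable hle2 hsm2 hW₂i
    have h2 : P[(fun ω => W₁ ω + Eps ω) | m₂] =ᵐ[P] fun _ => ∫ ω, (W₁ ω + Eps ω) ∂P :=
      condExp_indep_eq ((hW₁.add hEps).comap_le) hle2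
        (Measurable.stronglyMeasurable (measurable_iff_comap_le.2 le_rfl))
        (hindAux 0 2 1 W₁ Eps W₂ rfl rfl rfl (by decide) (by decide))
    have hint : ∫ ω, (W₁ ω + Eps ω) ∂P = a := by
      rw [integral_add hW₁i hEi, hmean, add_zero]
    rw [h1]
    filter_upwards [h2] with ω hω
    have hω' : (P[W₁ + Eps | m₂]) ω = a := by
      rw [show (W₁ + Eps : Ω → ℝ) = fun ω => W₁ ω + Eps ω from rfl, hω, hint]
    simp only [Pi.add_apply]
    rw [hω']
  -- variances
  have hv12 : variance (P[Y | m₁ ⊔ m₂]) P = variance W₁ P + variance W₂ P := by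
    rw [my_variance_congr hc12]
    exact hind12.variance_add hW₁2 hW₂2
  have hv1 : variance (P[Y | m₁]) P = variance W₁ P := by
    rw [my_variance_congr hc1]; exact my_variance_add_const hW₁i b
  have hv2 : variance (P[Y | m₂]) P = variance W₂ P := by
    rw [my_variance_congr hc2]; exact my_variance_add_const hW₂i a
  have hpart1 : variance (P[Y | m₁ ⊔ m₂]) P - variance (P[Y | m₁]) P
      - variance (P[Y | m₂]) P = 0 := by
    rw [hv12, hv1, hv2]; ring
  refine ⟨hpart1, ?_⟩
  -- means of condexps
  have hmean12 : ∫ ω, (P[Y | m₁ ⊔ m₂]) ω ∂P = ∫ ω, Y ω ∂P := integral_condExp hle12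
  have hmean1 : ∫ ω, (P[Y | m₁]) ω ∂P = ∫ ω, Y ω ∂P := integral_condExp hle1
  have hmean2 : ∫ ω, (P[Y | m₂]) ω ∂P = ∫ ω, Y ω ∂P := integral_condExp hle2
  -- MemLp 2 of condexps
  have hL12 : MemLp (P[Y | m₁ ⊔ m₂]) 2 P := (hW₁2.add hW₂2).ae_eq hc12.symm
  have hL1 : MemLp (P[Y | m₁]) 2 P :=
    (hW₁2.add (memLp_const b)).ae_eq hc1.symm
  have hL2 : MemLp (P[Y | m₂]) 2 P :=
    (hW₂2.add (memLp_const a)).ae_eq hc2.symm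
  -- second moments via variance_eq_sub
  have hsq : ∀ (g : Ω → ℝ), MemLp g 2 P →
      ∫ ω, (g ω) ^ 2 ∂P = variance g P + (∫ ω, g ω ∂P) ^ 2 := by
    intro g hg
    have h := variance_eq_sub hg
    simp only [Pi.pow_apply] at h
    linarith
  rw [hsq _ hL12, hsq _ hL1, hsq _ hL2, hmean12, hmean1, hmean2, hv12, hv1, hv2]
  ring
end

section
/- Let W = (W_S, W_{−S}) with mutually independent components, E an error independent of W with mean zero, and Y(w) = f(w) + E for a bounded measurable f. Then Var(Y(W) − Y(W'_S, W_{−S})) = 0 (where W'_S is an independent copy of W_S, independent of everything else, and both outcomes use the same E) if and only if f(w_S, w_{−S}) = f(w'_S, w_{−S}) for P_{W_S} ⊗ P_{W_S} ⊗ P_{W_{−S}}-almost all (w_S, w'_S, w_{−S}). -/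
open MeasureTheory ProbabilityTheory

/-- Sharp-null equivalence: with `Y(w) = f(w) + E`, mutually independent
`(W_S, W'_S, W_{−S}, E)` where `W'_S` is an independent copy of `W_S`, the total
explainability of the block `W_S` vanishes, i.e.
`Var(Y(W_S, W_{−S}) − Y(W'_S, W_{−S})) = 0`, if and only if
`f(w_S, w_{−S}) = f(w'_S, w_{−S})` for `P_{W_S} ⊗ P_{W_S} ⊗ P_{W_{−S}}`-a.e.
`(w_S, w'_S, w_{−S})`. -/
theorem sharp_null_equivalence
    {Ω α β : Type*} {mΩ : MeasurableSpace Ω} [MeasurableSpace α] [MeasurableSpace β]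
    (P : Measure Ω) [IsProbabilityMeasure P]
    (WS WS' : Ω → α) (Wneg : Ω → β) (Eps : Ω → ℝ) (f : α × β → ℝ)
    (hWS : Measurable WS) (hWS' : Measurable WS') (hWneg : Measurable Wneg)
    (hEps : Measurable Eps) (hf : Measurable f)
    (C : ℝ) (hbound : ∀ x, |f x| ≤ C)
    (hmean : ∫ ω, Eps ω ∂P = 0)
    -- mutual independence of `(W_S, W'_S, W_{−S}, E)` together with the fact
    -- that `W'_S` has the same law as `W_S`:
    (hjoint : Measure.map (fun ω => (WS ω, WS' ω, Wneg ω, Eps ω)) P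
      = (Measure.map WS P).prod ((Measure.map WS P).prod
          ((Measure.map Wneg P).prod (Measure.map Eps P)))) :
    variance (fun ω => (f (WS ω, Wneg ω) + Eps ω) - (f (WS' ω, Wneg ω) + Eps ω)) P = 0
      ↔ ∀ᵐ x ∂((Measure.map WS P).prod ((Measure.map WS P).prod (Measure.map Wneg P))),
          f (x.1, x.2.2) = f (x.2.1, x.2.2) := by
  classical
  set ν : Measure α := Measure.map WS P with hν
  set ρ : Measure β := Measure.map Wneg P with hρ
  have hνP : IsProbabilityMeasure ν := Measure.isProbabilityMeasure_map hWS.aemeasurable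
  have hρP : IsProbabilityMeasure ρ := Measure.isProbabilityMeasure_map hWneg.aemeasurable
  have hεP : IsProbabilityMeasure (Measure.map Eps P) :=
    Measure.isProbabilityMeasure_map hEps.aemeasurable
  set μ : Measure (α × α × β) := ν.prod (ν.prod ρ) with hμ
  have hμP : IsProbabilityMeasure μ := by infer_instance
  -- the triple map and its law
  set T : Ω → α × α × β := fun ω => (WS ω, WS' ω, Wneg ω) with hTdef
  have hT : Measurable T := (hWS.prodMk (hWS'.prodMk hWneg))
  have hTlaw : Measure.map T P = μ := by
    have hcomp : T = (fun p : α × α × β × ℝ => (p.1, p.2.1, p.2.2.1)) ∘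
        (fun ω => (WS ω, WS' ω, Wneg ω, Eps ω)) := rfl
    have hproj : Measurable (fun p : α × α × β × ℝ => (p.1, p.2.1, p.2.2.1)) :=
      measurable_fst.prodMk ((measurable_fst.comp measurable_snd).prodMk
        (measurable_fst.comp (measurable_snd.comp measurable_snd)))
    rw [hcomp, ← Measure.map_map hproj (hWS.prodMk (hWS'.prodMk (hWneg.prodMk hEps))),
      hjoint]
    have h1 : (fun p : α × α × β × ℝ => (p.1, p.2.1, p.2.2.1)) =
        Prod.map (id : α → α) (Prod.map (id : α → α) (Prod.fst : β × ℝ → β)) := rfl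
    rw [h1, ← Measure.map_prod_map _ _ measurable_id
      (measurable_id.prodMap measurable_fst),
      ← Measure.map_prod_map _ _ measurable_id measurable_fst,
      Measure.map_fst_prod]
    simp [hμ]
  -- the centered function
  set g : α × α × β → ℝ := fun x => f (x.1, x.2.2) - f (x.2.1, x.2.2) with hgdef
  have hg : Measurable g :=
    (hf.comp (measurable_fst.prodMk (measurable_snd.comp measurable_snd))).sub
      (hf.comp ((measurable_fst.comp measurable_snd).prodMk
        (measurable_snd.comp measurable_snd)))
  set X : Ω → ℝ := fun ω => g (T ω) with hXdef
  have hXrw : (fun ω => (f (WS ω, Wneg ω) + Eps ω) - (f (WS' ω, Wneg ω) + Eps ω)) = X := by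
    funext ω; simp [X, g, T]
  have hXmeas : Measurable X := hg.comp hT
  have hXbdd : ∀ ω, ‖X ω‖ ≤ 2 * |C| := by
    intro ω
    have h1 := hbound (WS ω, Wneg ω)
    have h2 := hbound (WS' ω, Wneg ω)
    have hC : C ≤ |C| := le_abs_self C
    simp only [X, g, T, Real.norm_eq_abs]
    calc |f (WS ω, Wneg ω) - f (WS' ω, Wneg ω)| ≤ |f (WS ω, Wneg ω)| + |f (WS' ω, Wneg ω)| :=
          abs_sub _ _
      _ ≤ 2 * |C| := by linarith
  have hXmem : MemLp X 2 P :=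
    MemLp.of_bound hXmeas.aestronglyMeasurable (2 * |C|)
      (Filter.Eventually.of_forall hXbdd)
  -- the swap (a, b, c) ↦ (b, a, c) preserves μ and negates g
  set e : (α × α × β) ≃ᵐ (α × α × β) :=
    (MeasurableEquiv.prodAssoc.symm.trans
      ((MeasurableEquiv.prodComm.prodCongr (MeasurableEquiv.refl β)).trans
        MeasurableEquiv.prodAssoc)) with hedef
  have he : ∀ x : α × α × β, e x = (x.2.1, x.1, x.2.2) := fun x => rfl
  have hswap : MeasurePreserving (⇑e) μ μ := by
    have h1 : MeasurePreserving (⇑(MeasurableEquiv.prodAssoc.symm :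
        α × α × β ≃ᵐ (α × α) × β)) μ ((ν.prod ν).prod ρ) :=
      (measurePreserving_prodAssoc ν ν ρ).symm _
    have h2 : MeasurePreserving (Prod.map (Prod.swap : α × α → α × α) (id : β → β))
        ((ν.prod ν).prod ρ) ((ν.prod ν).prod ρ) :=
      (Measure.measurePreserving_swap.prod (MeasurePreserving.id ρ))
    have h3 : MeasurePreserving (⇑(MeasurableEquiv.prodAssoc :
        (α × α) × β ≃ᵐ α × α × β)) ((ν.prod ν).prod ρ) μ :=
      measurePreserving_prodAssoc ν ν ρ
    have h := (h3.comp h2).comp h1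
    have heq : ⇑e = (⇑(MeasurableEquiv.prodAssoc : (α × α) × β ≃ᵐ α × α × β)) ∘
        (Prod.map (Prod.swap : α × α → α × α) (id : β → β)) ∘
        (⇑(MeasurableEquiv.prodAssoc.symm : α × α × β ≃ᵐ (α × α) × β)) := by
      funext x; rfl
    rw [heq]; exact h
  -- the mean is zero
  have hint : Integrable g μ := by
    have : MemLp g 2 μ := MemLp.of_bound hg.aestronglyMeasurable (2 * |C|)
      (Filter.Eventually.of_forall (fun x => by
        have h1 := hbound (x.1, x.2.2); have h2 := hbound (x.2.1, x.2.2)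
        have hC : C ≤ |C| := le_abs_self C
        simp only [g, Real.norm_eq_abs]
        calc |f (x.1, x.2.2) - f (x.2.1, x.2.2)| ≤ |f (x.1, x.2.2)| + |f (x.2.1, x.2.2)| :=
              abs_sub _ _
          _ ≤ 2 * |C| := by linarith))
    exact this.integrable (by norm_num)
  have hgmean : ∫ x, g x ∂μ = 0 := by
    have hneg : ∀ x : α × α × β, g (e x) = -g x := by
      intro x; rw [he]; simp [g]
    have h1 : ∫ x, g (e x) ∂μ = ∫ x, g x ∂μ := hswap.integral_comp' g
    have h2 : ∫ x, g (e x) ∂μ = ∫ x, -g x ∂μ := by simp_rw [hneg]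
    rw [integral_neg] at h2
    linarith [h1, h2]
  have hXmean : ∫ ω, X ω ∂P = 0 := by
    rw [hXdef]
    rw [← integral_map hT.aemeasurable hg.aestronglyMeasurable, hTlaw, hgmean]
  -- rewrite the variance
  rw [hXrw]
  have hvar : variance X P = 0 ↔ X =ᵐ[P] fun _ => 0 := by
    rw [variance, ENNReal.toReal_eq_zero_iff]
    constructor
    · rintro (h | h)
      · have := (evariance_eq_zero_iff hXmeas.aemeasurable).mp h
        filter_upwards [this] with ω hω
        rw [hω, hXmean]
      · exact absurd h hXmem.evariance_lt_top.ne
    · intro h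
      left
      rw [evariance_eq_zero_iff hXmeas.aemeasurable]
      filter_upwards [h] with ω hω
      rw [hω, hXmean]
  rw [hvar]
  -- transfer the a.e. statement through the law of T
  have hset : MeasurableSet {x : α × α × β | f (x.1, x.2.2) = f (x.2.1, x.2.2)} := by
    exact measurableSet_eq_fun
      (hf.comp (measurable_fst.prodMk (measurable_snd.comp measurable_snd)))
      (hf.comp ((measurable_fst.comp measurable_snd).prodMk
        (measurable_snd.comp measurable_snd)))
  constructor
  · intro h
    rw [← hTlaw, ae_map_iff hT.aemeasurable hset]
    filter_upwards [h] with ω hω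
    have : g (T ω) = 0 := hω
    exact sub_eq_zero.mp this
  · intro h
    rw [← hTlaw, ae_map_iff hT.aemeasurable hset] at h
    filter_upwards [h] with ω hω
    exact sub_eq_zero.mpr hω
end
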